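/- For the integrated Ornstein–Uhlenbeck process, ρ̂(t) = γ(ρ(t)) satisfies ρ̂(t) ~ const·t as t → ∞ (more precisely there exist c₁, c₂ > 0 with c₁ t ≤ ρ̂(t) ≤ c₂ t for large t); consequently the mean one-sided first-passage time E[τ_a(x,0)] is infinite, while E[(τ_a(x,0))^{1/4}] is finite. -/

import Mathlib

open Real MeasureTheory

noncomputable def Fou (μ σ s : ℝ) : ℝ :=
  σ^2/(2*μ^3)*(1 - Real.exp (-(2*μ*s))) - 2*σ^2/μ^3*(1 - Real.exp (-(μ*s))) + σ^2/μ^2 * s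

lemma Fou_hasDerivAt (μ σ s : ℝ) (hμ : μ ≠ 0) :
    HasDerivAt (Fou μ σ) (σ^2/μ^2 * (1 - Real.exp (-(μ*s)))^2) s := by
  have h1 : HasDerivAt (fun s : ℝ => Real.exp (-(2*μ*s))) (Real.exp (-(2*μ*s)) * (-(2*μ))) s := by
    have h : HasDerivAt (fun s : ℝ => -(2*μ*s)) (-(2*μ)) s := by
      simpa using ((hasDerivAt_id s).const_mul (2*μ)).fun_neg
    exact (Real.hasDerivAt_exp _).comp s h
  have h2 : HasDerivAt (fun s : ℝ => Real.exp (-(μ*s))) (Real.exp (-(μ*s)) * (-μ)) s := by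
    have h : HasDerivAt (fun s : ℝ => -(μ*s)) (-μ) s := by
      simpa using ((hasDerivAt_id s).const_mul μ).fun_neg
    exact (Real.hasDerivAt_exp _).comp s h
  have h3 : HasDerivAt (fun s : ℝ => σ^2/μ^2 * s) (σ^2/μ^2) s := by
    simpa using (hasDerivAt_id s).const_mul (σ^2/μ^2)
  have H := (((h1.const_sub 1).const_mul (σ^2/(2*μ^3))).sub
    ((h2.const_sub 1).const_mul (2*σ^2/μ^3))).add h3
  refine H.congr_deriv ?_
  have he : Real.exp (-(2*μ*s)) = Real.exp (-(μ*s))^2 := by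
    rw [show -(2*μ*s) = -(μ*s) + -(μ*s) by ring, Real.exp_add, sq]
  rw [he]
  field_simp
  ring

lemma Fou_monotone (μ σ : ℝ) (hμ : 0 < μ) : Monotone (Fou μ σ) := by
  have hd : ∀ s, HasDerivAt (Fou μ σ) (σ^2/μ^2 * (1 - Real.exp (-(μ*s)))^2) s :=
    fun s => Fou_hasDerivAt μ σ s hμ.ne'
  apply monotone_of_deriv_nonneg (fun s => (hd s).differentiableAt)
  intro s
  rw [(hd s).deriv]
  positivity

lemma Fou_zero (μ σ : ℝ) : Fou μ σ 0 = 0 := by simp [Fou]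

lemma Fou_le (μ σ s : ℝ) (hμ : 0 < μ) (hσ : 0 < σ) (hs : 0 ≤ s) :
    Fou μ σ s ≤ σ^2/μ^2 * s := by
  unfold Fou
  set v := Real.exp (-(μ*s)) with hv
  have hv0 : 0 < v := Real.exp_pos _
  have hv1 : v ≤ 1 := Real.exp_le_one_iff.2 (by nlinarith)
  have h2 : Real.exp (-(2*μ*s)) = v^2 := by
    rw [show -(2*μ*s) = -(μ*s) + -(μ*s) by ring, Real.exp_add, sq]
  rw [h2]
  have hc : (0:ℝ) < σ^2/(2*μ^3) := by positivity
  have h1 : 0 ≤ (1-v)*(3-v) := by nlinarith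
  have key : σ^2/(2*μ^3)*(1 - v^2) - 2*σ^2/μ^3*(1-v) + σ^2/μ^2*s
      = σ^2/μ^2*s - σ^2/(2*μ^3)*((1-v)*(3-v)) := by ring
  rw [key]
  nlinarith [mul_nonneg hc.le h1]

lemma Fou_ge (μ σ s : ℝ) (hμ : 0 < μ) (hσ : 0 < σ) (hs : 0 ≤ s) :
    σ^2/μ^2 * s - 2*σ^2/μ^3 ≤ Fou μ σ s := by
  unfold Fou
  set v := Real.exp (-(μ*s)) with hv
  have hv0 : 0 < v := Real.exp_pos _
  have hv1 : v ≤ 1 := Real.exp_le_one_iff.2 (by nlinarith)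
  have h2 : Real.exp (-(2*μ*s)) = v^2 := by
    rw [show -(2*μ*s) = -(μ*s) + -(μ*s) by ring, Real.exp_add, sq]
  rw [h2]
  have hc : (0:ℝ) < σ^2/(2*μ^3) := by positivity
  have hc2 : (0:ℝ) < 2*σ^2/μ^3 := by positivity
  have key : σ^2/(2*μ^3)*(1 - v^2) - 2*σ^2/μ^3*(1-v) + σ^2/μ^2*s
      = σ^2/μ^2*s - 2*σ^2/μ^3 + (σ^2/(2*μ^3)*(1-v^2) + 2*σ^2/μ^3*v) := by ring
  rw [key]
  nlinarith [mul_nonneg hc.le (by nlinarith : (0:ℝ) ≤ 1 - v^2),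
    mul_nonneg hc2.le hv0.le]

set_option maxHeartbeats 1000000

/-- For the integrated OU process, `ρ̂ = γ ∘ ρ` grows linearly
(`c₁ t ≤ ρ̂ t ≤ c₂ t` for large `t`); consequently the mean one-sided
first-passage time `E[τ_a(x,0)] = E[ρ̂⁻¹(T)]` (computed against the Brownian
hitting-time density at level `a − x > 0`) is infinite, while
`E[(τ_a(x,0))^{1/4}]` is finite. -/
theorem integratedOU_FPT_moments (μ σ x a : ℝ) (hμ : 0 < μ) (hσ : 0 < σ)
    (hxa : x < a)
    (γ ρ ρh ρinv : ℝ → ℝ)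
    (hγ : ∀ t, γ t = σ ^ 2 * t / (μ ^ 2 * (σ ^ 2 + 2 * μ * t))
      - 2 * σ ^ 2 / (μ ^ 3 * Real.sqrt (1 + 2 * μ * t / σ ^ 2)) *
          (Real.sqrt (1 + 2 * μ * t / σ ^ 2) - 1)
      + σ ^ 2 / (2 * μ ^ 3) * Real.log (1 + 2 * μ * t / σ ^ 2))
    (hρ : ∀ t, ρ t = σ ^ 2 / (2 * μ) * (Real.exp (2 * μ * t) - 1))
    (hρh : ∀ t, ρh t = γ (ρ t))
    (hρinv : ∀ t, 0 < t → ρinv (ρh t) = t ∧ ρh (ρinv t) = t) :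
    (∃ c₁ c₂ t₀ : ℝ, 0 < c₁ ∧ 0 < c₂ ∧
      ∀ t, t₀ ≤ t → c₁ * t ≤ ρh t ∧ ρh t ≤ c₂ * t) ∧
    (∫⁻ t in Set.Ioi (0:ℝ),
        ENNReal.ofReal (ρinv t *
          ((a - x) / (Real.sqrt (2 * π) * t ^ ((3:ℝ)/2)) *
            Real.exp (-(a - x) ^ 2 / (2 * t)))) = ⊤) ∧
    IntegrableOn
      (fun t => (ρinv t) ^ ((1:ℝ)/4) *
        ((a - x) / (Real.sqrt (2 * π) * t ^ ((3:ℝ)/2)) *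
          Real.exp (-(a - x) ^ 2 / (2 * t))))
      (Set.Ioi 0) := by
  have hμ0 : μ ≠ 0 := hμ.ne'
  have hσ0 : σ ≠ 0 := hσ.ne'
  -- explicit formula for ρh
  have key : ∀ s, ρh s = Fou μ σ s := by
    intro s
    rw [hρh, hγ, hρ]
    have hσ2 : (0:ℝ) < σ^2 := by positivity
    have e1 : 1 + 2*μ*(σ^2/(2*μ)*(Real.exp (2*μ*s) - 1))/σ^2 = Real.exp (2*μ*s) := by
      field_simp
      ring
    rw [e1]
    have e2 : Real.sqrt (Real.exp (2*μ*s)) = Real.exp (μ*s) := by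
      rw [show 2*μ*s = μ*s + μ*s by ring, Real.exp_add, ← sq, Real.sqrt_sq (Real.exp_pos _).le]
    rw [e2, Real.log_exp]
    unfold Fou
    have hm : Real.exp (-(μ*s)) = (Real.exp (μ*s))⁻¹ := by rw [Real.exp_neg]
    have hm2 : Real.exp (-(2*μ*s)) = ((Real.exp (μ*s))⁻¹)^2 := by
      rw [show -(2*μ*s) = -(μ*s) + -(μ*s) by ring, Real.exp_add, sq, Real.exp_neg]
    have h2 : Real.exp (2*μ*s) = (Real.exp (μ*s))^2 := by
      rw [show 2*μ*s = μ*s + μ*s by ring, Real.exp_add, sq]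
    rw [hm, hm2, h2]
    have hu : (0:ℝ) < Real.exp (μ*s) := Real.exp_pos _
    set u := Real.exp (μ*s)
    have hu0 : u ≠ 0 := ne_of_gt hu
    have hd : σ^2 + 2*μ*(σ^2/(2*μ)*(u^2 - 1)) = σ^2*u^2 := by field_simp; ring
    rw [hd]
    field_simp
  have hub : ∀ s, 0 ≤ s → ρh s ≤ σ^2/μ^2 * s := by
    intro s hs; rw [key]; exact Fou_le μ σ s hμ hσ hs
  have hlb : ∀ s, 0 ≤ s → σ^2/μ^2 * s - 2*σ^2/μ^3 ≤ ρh s := by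
    intro s hs; rw [key]; exact Fou_ge μ σ s hμ hσ hs
  have hmono : Monotone ρh := by
    intro s1 s2 h
    rw [key, key]; exact Fou_monotone μ σ hμ h
  have hρh0 : ρh 0 = 0 := by rw [key]; exact Fou_zero μ σ
  have hinv_pos : ∀ t, 0 < t → 0 < ρinv t := by
    intro t ht
    by_contra h
    push_neg at h
    have h1 : ρh (ρinv t) ≤ ρh 0 := hmono h
    rw [hρh0, (hρinv t ht).2] at h1
    linarith
  have hinv_lb : ∀ t, 0 < t → μ^2/σ^2 * t ≤ ρinv t := by
    intro t ht
    have h1 := hub (ρinv t) (hinv_pos t ht).le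
    rw [(hρinv t ht).2] at h1
    have h3 : μ^2/σ^2 * t ≤ μ^2/σ^2 * (σ^2/μ^2 * ρinv t) :=
      mul_le_mul_of_nonneg_left h1 (by positivity)
    have h4 : μ^2/σ^2 * (σ^2/μ^2 * ρinv t) = ρinv t := by field_simp
    linarith
  have hinv_ub : ∀ t, 0 < t → ρinv t ≤ μ^2/σ^2 * t + 2/μ := by
    intro t ht
    have h1 := hlb (ρinv t) (hinv_pos t ht).le
    rw [(hρinv t ht).2] at h1
    have h3 : μ^2/σ^2 * (σ^2/μ^2 * ρinv t - 2*σ^2/μ^3) ≤ μ^2/σ^2 * t :=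
      mul_le_mul_of_nonneg_left h1 (by positivity)
    have h4 : μ^2/σ^2 * (σ^2/μ^2 * ρinv t - 2*σ^2/μ^3) = ρinv t - 2/μ := by
      field_simp
    linarith
  have hmono_inv : MonotoneOn ρinv (Set.Ioi 0) := by
    intro t1 h1 t2 h2 h12
    rw [Set.mem_Ioi] at h1 h2
    by_contra hlt
    push_neg at hlt
    have h3 := hmono hlt.le
    rw [(hρinv t1 h1).2, (hρinv t2 h2).2] at h3
    have ht12 : t1 = t2 := le_antisymm h12 h3
    rw [ht12] at hlt
    exact lt_irrefl _ hlt
  set k := a - x with hkdef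
  have hk : 0 < k := sub_pos.2 hxa
  have hsq : 0 < Real.sqrt (2*π) := Real.sqrt_pos.2 (by positivity)
  refine ⟨⟨σ^2/(2*μ^2), σ^2/μ^2, 4/μ, by positivity, by positivity, ?_⟩, ?_, ?_⟩
  · -- linear growth
    intro t ht
    have ht0 : 0 ≤ t := le_trans (by positivity) ht
    refine ⟨?_, hub t ht0⟩
    have h1 := hlb t ht0
    have h2 : σ^2/(2*μ^2) * (4/μ) ≤ σ^2/(2*μ^2) * t :=
      mul_le_mul_of_nonneg_left ht (by positivity)
    have h3 : σ^2/(2*μ^2) * (4/μ) = 2*σ^2/μ^3 := by field_simp; ring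
    have h4 : σ^2/μ^2 * t = σ^2/(2*μ^2)*t + σ^2/(2*μ^2)*t := by ring
    linarith
  · -- infinite mean
    by_contra hfin
    set c := μ^2/σ^2 * (k / Real.sqrt (2*π)) * Real.exp (-k^2/2) with hcdef
    have hcpos : 0 < c :=
      mul_pos (mul_pos (by positivity) (div_pos hk hsq)) (Real.exp_pos _)
    have hbound : ∀ t ∈ Set.Ioi (1:ℝ), ENNReal.ofReal (c * t^(-(1:ℝ)/2)) ≤
        ENNReal.ofReal (ρinv t *
          (k / (Real.sqrt (2 * π) * t ^ ((3:ℝ)/2)) * Real.exp (-k ^ 2 / (2 * t)))) := by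
      intro t ht
      rw [Set.mem_Ioi] at ht
      have ht0 : (0:ℝ) < t := lt_trans one_pos ht
      apply ENNReal.ofReal_le_ofReal
      have e1 : Real.exp (-k^2/2) ≤ Real.exp (-k^2/(2*t)) := by
        apply Real.exp_le_exp.2
        have h5 : k^2/(2*t) ≤ k^2/2 := by
          apply div_le_div_of_nonneg_left (sq_nonneg k) two_pos
          linarith
        rw [neg_div, neg_div]
        linarith
      have hDpos : 0 ≤ k / (Real.sqrt (2 * π) * t ^ ((3:ℝ)/2)) :=
        div_nonneg hk.le (by positivity)
      have hD2 : k / (Real.sqrt (2 * π) * t ^ ((3:ℝ)/2)) * Real.exp (-k^2/2) ≤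
          k / (Real.sqrt (2 * π) * t ^ ((3:ℝ)/2)) * Real.exp (-k^2/(2*t)) :=
        mul_le_mul_of_nonneg_left e1 hDpos
      have heq : c * t^(-(1:ℝ)/2) =
          (μ^2/σ^2 * t) * (k / (Real.sqrt (2 * π) * t ^ ((3:ℝ)/2)) * Real.exp (-k^2/2)) := by
        have e4 : t^(-(1:ℝ)/2) = t / t^((3:ℝ)/2) := by
          rw [eq_div_iff (Real.rpow_pos_of_pos ht0 ((3:ℝ)/2)).ne',
            ← Real.rpow_add ht0, show (-(1:ℝ)/2) + (3:ℝ)/2 = 1 by norm_num, Real.rpow_one]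
        rw [hcdef, e4]
        ring
      rw [heq]
      apply mul_le_mul (hinv_lb t ht0) hD2
        (mul_nonneg hDpos (Real.exp_pos _).le) (hinv_pos t ht0).le
    have h1 : ∫⁻ t in Set.Ioi (1:ℝ), ENNReal.ofReal (c * t^(-(1:ℝ)/2)) ≤
        ∫⁻ t in Set.Ioi (0:ℝ), ENNReal.ofReal (ρinv t *
          (k / (Real.sqrt (2 * π) * t ^ ((3:ℝ)/2)) * Real.exp (-k ^ 2 / (2 * t)))) :=
      le_trans (setLIntegral_mono' measurableSet_Ioi hbound)
        (lintegral_mono_set (Set.Ioi_subset_Ioi zero_le_one))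
    have h2 : ∫⁻ t in Set.Ioi (1:ℝ), ENNReal.ofReal (c * t^(-(1:ℝ)/2)) < ⊤ :=
      lt_of_le_of_lt h1 (lt_top_iff_ne_top.2 hfin)
    have hint : IntegrableOn (fun t:ℝ => c * t^(-(1:ℝ)/2)) (Set.Ioi 1) := by
      constructor
      · exact (measurable_const.mul (measurable_id.pow measurable_const)).aestronglyMeasurable
      · rw [hasFiniteIntegral_iff_ofReal]
        · exact h2
        · filter_upwards [ae_restrict_mem measurableSet_Ioi] with t ht
          have ht0 : (0:ℝ) < t := lt_trans one_pos ht
          positivity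
    have hint2 : IntegrableOn (fun t:ℝ => t^(-(1:ℝ)/2)) (Set.Ioi 1) := by
      have h := hint.const_mul c⁻¹
      simpa [IntegrableOn, ← mul_assoc, inv_mul_cancel₀ hcpos.ne'] using h
    rw [integrableOn_Ioi_rpow_iff zero_lt_one] at hint2
    norm_num at hint2
  · -- finite 1/4-moment
    have hAEM : AEMeasurable ρinv (volume.restrict (Set.Ioi 0)) :=
      aemeasurable_restrict_of_monotoneOn measurableSet_Ioi hmono_inv
    have hD : Measurable fun t:ℝ =>
        k / (Real.sqrt (2 * π) * t ^ ((3:ℝ)/2)) * Real.exp (-k ^ 2 / (2 * t)) := by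
      apply Measurable.mul
      · exact measurable_const.div (measurable_const.mul (measurable_id.pow measurable_const))
      · exact Real.measurable_exp.comp (measurable_const.div (measurable_const.mul measurable_id))
    have hfm : AEStronglyMeasurable (fun t => (ρinv t) ^ ((1:ℝ)/4) *
        (k / (Real.sqrt (2 * π) * t ^ ((3:ℝ)/2)) * Real.exp (-k ^ 2 / (2 * t))))
        (volume.restrict (Set.Ioi 0)) :=
      ((hAEM.pow aemeasurable_const).mul hD.aemeasurable).aestronglyMeasurable
    have hinvb : ∀ t : ℝ, 0 < t → t ≤ 1 → ρinv t ≤ μ^2/σ^2 + 2/μ := by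
      intro t ht0 ht1
      have := hinv_ub t ht0
      have h5 : μ^2/σ^2 * t ≤ μ^2/σ^2 * 1 := mul_le_mul_of_nonneg_left ht1 (by positivity)
      nlinarith
    have hC : (0:ℝ) ≤ μ^2/σ^2 + 2/μ := by positivity
    rw [show Set.Ioi (0:ℝ) = Set.Ioc 0 1 ∪ Set.Ioi 1 from
      (Set.Ioc_union_Ioi_eq_Ioi zero_le_one).symm]
    apply IntegrableOn.union
    · -- on (0,1]
      set B1 : ℝ := (μ^2/σ^2 + 2/μ)^((1:ℝ)/4) * (k / Real.sqrt (2*π) * (16/k^4)) with hB1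
      apply Integrable.mono' (g := fun _ => B1)
        (integrableOn_const measure_Ioc_lt_top.ne)
        (hfm.mono_measure (Measure.restrict_mono Set.Ioc_subset_Ioi_self le_rfl))
      filter_upwards [ae_restrict_mem measurableSet_Ioc] with t ht
      obtain ⟨ht0, ht1⟩ := ht
      have hrp : 0 < ρinv t := hinv_pos t ht0
      have hfnn : 0 ≤ (ρinv t) ^ ((1:ℝ)/4) *
          (k / (Real.sqrt (2 * π) * t ^ ((3:ℝ)/2)) * Real.exp (-k ^ 2 / (2 * t))) :=
        mul_nonneg (Real.rpow_nonneg hrp.le _)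
          (mul_nonneg (div_nonneg hk.le (by positivity)) (Real.exp_pos _).le)
      rw [Real.norm_eq_abs, abs_of_nonneg hfnn]
      -- bound on the exponential
      have hexp : Real.exp (-k ^ 2 / (2 * t)) ≤ 16*t^2/k^4 := by
        set u : ℝ := k^2/(2*t) with hudef
        have hu : 0 < u := by positivity
        have ha : u/2 + 1 ≤ Real.exp (u/2) := Real.add_one_le_exp _
        have hb : Real.exp (u/2)^2 = Real.exp u := by
          rw [sq, ← Real.exp_add, add_halves]
        have hc' : u^2/4 ≤ Real.exp u := by nlinarith [Real.exp_pos (u/2)]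
        have hd' : Real.exp (-u) ≤ 4/u^2 := by
          rw [Real.exp_neg, inv_eq_one_div]
          have h6 : 1/Real.exp u ≤ 1/(u^2/4) :=
            one_div_le_one_div_of_le (by positivity) hc'
          have h7 : 1/(u^2/4) = 4/u^2 := by field_simp
          linarith
        have h8 : -k ^ 2 / (2 * t) = -u := by rw [hudef, neg_div]
        have h9 : 4/u^2 = 16*t^2/k^4 := by
          rw [hudef]; field_simp; ring
        rw [h8]
        linarith
      have hE1 : k / (Real.sqrt (2 * π) * t ^ ((3:ℝ)/2)) * Real.exp (-k ^ 2 / (2 * t)) ≤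
          k / Real.sqrt (2*π) * (16/k^4) := by
        have step1 : k / (Real.sqrt (2 * π) * t ^ ((3:ℝ)/2)) * Real.exp (-k ^ 2 / (2 * t)) ≤
            k / (Real.sqrt (2 * π) * t ^ ((3:ℝ)/2)) * (16*t^2/k^4) :=
          mul_le_mul_of_nonneg_left hexp (div_nonneg hk.le (by positivity))
        have e6 : t^(2:ℕ) / t^((3:ℝ)/2) = t^((1:ℝ)/2) := by
          rw [← Real.rpow_natCast t 2, ← Real.rpow_sub ht0]
          norm_num
        have e7 : t^((1:ℝ)/2) ≤ 1 := Real.rpow_le_one ht0.le ht1 (by norm_num)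
        have step2 : k / (Real.sqrt (2 * π) * t ^ ((3:ℝ)/2)) * (16*t^2/k^4) =
            k / Real.sqrt (2*π) * (16/k^4) * (t^(2:ℕ) / t^((3:ℝ)/2)) := by
          ring
        have step3 : k / Real.sqrt (2*π) * (16/k^4) * (t^(2:ℕ) / t^((3:ℝ)/2)) ≤
            k / Real.sqrt (2*π) * (16/k^4) * 1 := by
          apply mul_le_mul_of_nonneg_left _ (by positivity)
          rw [e6]; exact e7
        rw [step2] at step1
        calc k / (Real.sqrt (2 * π) * t ^ ((3:ℝ)/2)) * Real.exp (-k ^ 2 / (2 * t))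
            ≤ k / Real.sqrt (2*π) * (16/k^4) * (t^(2:ℕ) / t^((3:ℝ)/2)) := step1
          _ ≤ k / Real.sqrt (2*π) * (16/k^4) * 1 := step3
          _ = k / Real.sqrt (2*π) * (16/k^4) := by ring
      have hr1 : (ρinv t) ^ ((1:ℝ)/4) ≤ (μ^2/σ^2 + 2/μ)^((1:ℝ)/4) :=
        Real.rpow_le_rpow hrp.le (hinvb t ht0 ht1) (by norm_num)
      calc (ρinv t) ^ ((1:ℝ)/4) *
          (k / (Real.sqrt (2 * π) * t ^ ((3:ℝ)/2)) * Real.exp (-k ^ 2 / (2 * t)))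
          ≤ (μ^2/σ^2 + 2/μ)^((1:ℝ)/4) * (k / Real.sqrt (2*π) * (16/k^4)) := by
            apply mul_le_mul hr1 hE1
              (mul_nonneg (div_nonneg hk.le (by positivity)) (Real.exp_pos _).le)
              (Real.rpow_nonneg hC _)
        _ = B1 := hB1.symm
    · -- on (1,∞)
      set B2 : ℝ := (μ^2/σ^2 + 2/μ)^((1:ℝ)/4) * (k / Real.sqrt (2*π)) with hB2
      have hg : IntegrableOn (fun t:ℝ => B2 * t^(-(5:ℝ)/4)) (Set.Ioi 1) :=
        (integrableOn_Ioi_rpow_of_lt (by norm_num) zero_lt_one).const_mul B2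
      apply Integrable.mono' hg
        (hfm.mono_measure (Measure.restrict_mono (Set.Ioi_subset_Ioi zero_le_one) le_rfl))
      filter_upwards [ae_restrict_mem measurableSet_Ioi] with t ht
      rw [Set.mem_Ioi] at ht
      have ht0 : (0:ℝ) < t := lt_trans one_pos ht
      have hrp : 0 < ρinv t := hinv_pos t ht0
      have hfnn : 0 ≤ (ρinv t) ^ ((1:ℝ)/4) *
          (k / (Real.sqrt (2 * π) * t ^ ((3:ℝ)/2)) * Real.exp (-k ^ 2 / (2 * t))) :=
        mul_nonneg (Real.rpow_nonneg hrp.le _)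
          (mul_nonneg (div_nonneg hk.le (by positivity)) (Real.exp_pos _).le)
      rw [Real.norm_eq_abs, abs_of_nonneg hfnn]
      have hrb : ρinv t ≤ (μ^2/σ^2 + 2/μ) * t := by
        have h5 := hinv_ub t ht0
        have h6 : 2/μ * 1 ≤ 2/μ * t := mul_le_mul_of_nonneg_left ht.le (by positivity)
        nlinarith
      have hr1 : (ρinv t) ^ ((1:ℝ)/4) ≤ ((μ^2/σ^2 + 2/μ) * t)^((1:ℝ)/4) :=
        Real.rpow_le_rpow hrp.le hrb (by norm_num)
      have hr2 : ((μ^2/σ^2 + 2/μ) * t)^((1:ℝ)/4) =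
          (μ^2/σ^2 + 2/μ)^((1:ℝ)/4) * t^((1:ℝ)/4) :=
        Real.mul_rpow hC ht0.le
      have hE1 : k / (Real.sqrt (2 * π) * t ^ ((3:ℝ)/2)) * Real.exp (-k ^ 2 / (2 * t)) ≤
          k / Real.sqrt (2*π) * t^(-(3:ℝ)/2) := by
        have h5 : Real.exp (-k ^ 2 / (2 * t)) ≤ 1 := by
          rw [Real.exp_le_one_iff]
          rw [neg_div]
          simp only [Left.neg_nonpos_iff]
          positivity
        have h6 : k / (Real.sqrt (2 * π) * t ^ ((3:ℝ)/2)) * Real.exp (-k ^ 2 / (2 * t)) ≤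
            k / (Real.sqrt (2 * π) * t ^ ((3:ℝ)/2)) * 1 :=
          mul_le_mul_of_nonneg_left h5 (div_nonneg hk.le (by positivity))
        have h7 : k / (Real.sqrt (2 * π) * t ^ ((3:ℝ)/2)) * 1 =
            k / Real.sqrt (2*π) * t^(-(3:ℝ)/2) := by
          rw [show (-(3:ℝ)/2) = -((3:ℝ)/2) by norm_num, Real.rpow_neg ht0.le]
          ring
        linarith
      have e5 : t^((1:ℝ)/4) * t^(-(3:ℝ)/2) = t^(-(5:ℝ)/4) := by
        rw [← Real.rpow_add ht0]
        norm_num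
      calc (ρinv t) ^ ((1:ℝ)/4) *
          (k / (Real.sqrt (2 * π) * t ^ ((3:ℝ)/2)) * Real.exp (-k ^ 2 / (2 * t)))
          ≤ ((μ^2/σ^2 + 2/μ)^((1:ℝ)/4) * t^((1:ℝ)/4)) * (k / Real.sqrt (2*π) * t^(-(3:ℝ)/2)) := by
            apply mul_le_mul (le_of_le_of_eq hr1 hr2) hE1
              (mul_nonneg (div_nonneg hk.le (by positivity)) (Real.exp_pos _).le)
              (mul_nonneg (Real.rpow_nonneg hC _) (Real.rpow_nonneg ht0.le _))
        _ = B2 * (t^((1:ℝ)/4) * t^(-(3:ℝ)/2)) := by rw [hB2]; ring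
        _ = B2 * t^(-(5:ℝ)/4) := by rw [e5]
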